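/- Let A, B, C be unital ℂ-algebras with B commutative, let Δ : A → A ⊗ A and Φ : A → B ⊗ C be unital algebra homomorphisms, let m : B ⊗ B → B be the multiplication homomorphism, F : C ⊗ B → B ⊗ C the flip, and set W = (id_B ⊗ F ⊗ id_{C⊗C}) ∘ (id_{B⊗C} ⊗ F ⊗ id_C). Suppose Γ : C → C ⊗ C is a unital algebra homomorphism satisfying (id_B ⊗ Γ) ∘ Φ = (m ⊗ id_{C⊗C}) ∘ (id_B ⊗ F ⊗ id_C) ∘ (Φ ⊗ Φ) ∘ Δ. Then (id_B ⊗ Γ ⊗ id_C) ∘ (id_B ⊗ Γ) ∘ Φ = (m ⊗ id_{C⊗C⊗C}) ∘ W ∘ (m ⊗ id_{C⊗C⊗B⊗C}) ∘ (id_B ⊗ F ⊗ id_{C⊗B⊗C}) ∘ (Φ ⊗ Φ ⊗ Φ) ∘ (Δ ⊗ id_A) ∘ Δ. -/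

import Mathlib

open TensorProduct

set_option maxSynthPendingDepth 5
set_option maxHeartbeats 1000000

section
variable (B C : Type) [CommRing B] [Ring C] [Algebra ℂ B] [Algebra ℂ C]

/-- The flip `F : C ⊗ B → B ⊗ C` as an algebra homomorphism. -/
noncomputable def flipCB : C ⊗[ℂ] B →ₐ[ℂ] B ⊗[ℂ] C :=
  (Algebra.TensorProduct.comm ℂ C B).toAlgHom

/-- `W = (id_B ⊗ F ⊗ id_{C⊗C}) ∘ (id_{B⊗C} ⊗ F ⊗ id_C) : B⊗C⊗C⊗B⊗C → B⊗B⊗C⊗C⊗C`, with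
the canonical associativity identifications (implicit in the classical notation)
inserted explicitly. -/
noncomputable def WhomAlg :
    (B ⊗[ℂ] (C ⊗[ℂ] (C ⊗[ℂ] (B ⊗[ℂ] C))))
      →ₐ[ℂ] (B ⊗[ℂ] ((B ⊗[ℂ] C) ⊗[ℂ] (C ⊗[ℂ] C))) :=
  -- id_B ⊗ F ⊗ id_{C⊗C}
  (Algebra.TensorProduct.map (AlgHom.id ℂ B)
    (Algebra.TensorProduct.map (flipCB B C) (AlgHom.id ℂ (C ⊗[ℂ] C)))).comp <|
  -- reassociation
  ((Algebra.TensorProduct.congr (AlgEquiv.refl (A₁ := B))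
    ((Algebra.TensorProduct.congr (AlgEquiv.refl (A₁ := C))
        (Algebra.TensorProduct.assoc ℂ ℂ ℂ B C C)).trans
      (Algebra.TensorProduct.assoc ℂ ℂ ℂ C B (C ⊗[ℂ] C)).symm)).toAlgHom).comp <|
  -- id_{B⊗C} ⊗ F ⊗ id_C
  (Algebra.TensorProduct.map (AlgHom.id ℂ B) (Algebra.TensorProduct.map (AlgHom.id ℂ C)
    (Algebra.TensorProduct.map (flipCB B C) (AlgHom.id ℂ C)))).comp
  -- reassociation
  (Algebra.TensorProduct.congr (AlgEquiv.refl (A₁ := B))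
    (Algebra.TensorProduct.congr (AlgEquiv.refl (A₁ := C))
      (Algebra.TensorProduct.assoc ℂ ℂ ℂ C B C).symm)).toAlgHom

/-- `(m ⊗ id_{C⊗C⊗C}) ∘ W ∘ (m ⊗ id_{C⊗C⊗B⊗C}) ∘ (id_B ⊗ F ⊗ id_{C⊗B⊗C}) :
B⊗C⊗B⊗C⊗B⊗C → B⊗C⊗C⊗C`, with the canonical associativity identifications inserted. -/
noncomputable def sixFoldRHSAlg :
    (B ⊗[ℂ] (C ⊗[ℂ] (B ⊗[ℂ] (C ⊗[ℂ] (B ⊗[ℂ] C))))) →ₐ[ℂ] (B ⊗[ℂ] (C ⊗[ℂ] (C ⊗[ℂ] C))) :=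
  -- m ⊗ id_{C⊗C⊗C}
  (Algebra.TensorProduct.map (Algebra.TensorProduct.lmul' ℂ (S := B))
    (AlgHom.id ℂ (C ⊗[ℂ] (C ⊗[ℂ] C)))).comp <|
  -- reassociation
  (((Algebra.TensorProduct.congr (AlgEquiv.refl (A₁ := B))
        (Algebra.TensorProduct.assoc ℂ ℂ ℂ B C (C ⊗[ℂ] C))).trans
    (Algebra.TensorProduct.assoc ℂ ℂ ℂ B B (C ⊗[ℂ] (C ⊗[ℂ] C))).symm).toAlgHom).comp <|
  -- W
  (WhomAlg B C).comp <|
  -- m ⊗ id_{C⊗C⊗B⊗C}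
  (Algebra.TensorProduct.map (Algebra.TensorProduct.lmul' ℂ (S := B))
    (AlgHom.id ℂ (C ⊗[ℂ] (C ⊗[ℂ] (B ⊗[ℂ] C))))).comp <|
  -- reassociation
  (((Algebra.TensorProduct.congr (AlgEquiv.refl (A₁ := B))
        (Algebra.TensorProduct.assoc ℂ ℂ ℂ B C (C ⊗[ℂ] (B ⊗[ℂ] C)))).trans
    (Algebra.TensorProduct.assoc ℂ ℂ ℂ B B (C ⊗[ℂ] (C ⊗[ℂ] (B ⊗[ℂ] C)))).symm).toAlgHom).comp <|
  -- id_B ⊗ F ⊗ id_{C⊗B⊗C}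
  (Algebra.TensorProduct.map (AlgHom.id ℂ B)
    (Algebra.TensorProduct.map (flipCB B C) (AlgHom.id ℂ (C ⊗[ℂ] (B ⊗[ℂ] C))))).comp
  -- reassociation
  (Algebra.TensorProduct.congr (AlgEquiv.refl (A₁ := B))
    (Algebra.TensorProduct.assoc ℂ ℂ ℂ C B (C ⊗[ℂ] (B ⊗[ℂ] C))).symm).toAlgHom

variable (A : Type) [Ring A] [Algebra ℂ A]

/-- The composite `(m ⊗ id_{C⊗C}) ∘ (id_B ⊗ F ⊗ id_C) ∘ (Φ ⊗ Φ) ∘ Δ : A → B ⊗ (C ⊗ C)`,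
the right-hand side of the defining property of `Γ`. -/
noncomputable def comulRHS (Δ : A →ₐ[ℂ] A ⊗[ℂ] A) (Φ : A →ₐ[ℂ] B ⊗[ℂ] C) :
    A →ₐ[ℂ] B ⊗[ℂ] (C ⊗[ℂ] C) :=
  (Algebra.TensorProduct.map (Algebra.TensorProduct.lmul' ℂ (S := B))
      (AlgHom.id ℂ (C ⊗[ℂ] C))).comp <|
  (((Algebra.TensorProduct.congr (AlgEquiv.refl (A₁ := B))
        (Algebra.TensorProduct.assoc ℂ ℂ ℂ B C C)).trans
      (Algebra.TensorProduct.assoc ℂ ℂ ℂ B B (C ⊗[ℂ] C)).symm).toAlgHom).comp <|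
  (Algebra.TensorProduct.map (AlgHom.id ℂ B)
      (Algebra.TensorProduct.map (flipCB B C) (AlgHom.id ℂ C))).comp <|
  ((((Algebra.TensorProduct.assoc ℂ ℂ ℂ B C (B ⊗[ℂ] C)).trans
      (Algebra.TensorProduct.congr (AlgEquiv.refl (A₁ := B))
        (Algebra.TensorProduct.assoc ℂ ℂ ℂ C B C).symm)).toAlgHom).comp
    ((Algebra.TensorProduct.map Φ Φ).comp Δ))

/-- The canonical associativity identification
`((B⊗C) ⊗ (B⊗C)) ⊗ (B⊗C) ≃ B ⊗ (C ⊗ (B ⊗ (C ⊗ (B ⊗ C))))`. -/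
noncomputable def reassocSix' :
    (((B ⊗[ℂ] C) ⊗[ℂ] (B ⊗[ℂ] C)) ⊗[ℂ] (B ⊗[ℂ] C)) ≃ₐ[ℂ]
      (B ⊗[ℂ] (C ⊗[ℂ] (B ⊗[ℂ] (C ⊗[ℂ] (B ⊗[ℂ] C))))) :=
  ((Algebra.TensorProduct.assoc ℂ ℂ ℂ (B ⊗[ℂ] C) (B ⊗[ℂ] C) (B ⊗[ℂ] C)).trans
    (Algebra.TensorProduct.assoc ℂ ℂ ℂ B C ((B ⊗[ℂ] C) ⊗[ℂ] (B ⊗[ℂ] C)))).trans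
    (Algebra.TensorProduct.congr (AlgEquiv.refl (A₁ := B))
      (Algebra.TensorProduct.congr (AlgEquiv.refl (A₁ := C))
        (Algebra.TensorProduct.assoc ℂ ℂ ℂ B C (B ⊗[ℂ] C))))


section Aux
variable (B C : Type) [CommRing B] [Ring C] [Algebra ℂ B] [Algebra ℂ C]

open Algebra.TensorProduct

/-- The structural part `K : (B⊗C)⊗(B⊗C) → B⊗(C⊗C)` of `comulRHS`:
`(b⊗c)⊗(b'⊗c') ↦ bb' ⊗ (c⊗c')`. -/
noncomputable def Khom : ((B ⊗[ℂ] C) ⊗[ℂ] (B ⊗[ℂ] C)) →ₐ[ℂ] B ⊗[ℂ] (C ⊗[ℂ] C) :=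
  (Algebra.TensorProduct.map (Algebra.TensorProduct.lmul' ℂ (S := B))
      (AlgHom.id ℂ (C ⊗[ℂ] C))).comp <|
  (((Algebra.TensorProduct.congr (AlgEquiv.refl (A₁ := B))
        (Algebra.TensorProduct.assoc ℂ ℂ ℂ B C C)).trans
      (Algebra.TensorProduct.assoc ℂ ℂ ℂ B B (C ⊗[ℂ] C)).symm).toAlgHom).comp <|
  (Algebra.TensorProduct.map (AlgHom.id ℂ B)
      (Algebra.TensorProduct.map (flipCB B C) (AlgHom.id ℂ C))).comp <|
  (((Algebra.TensorProduct.assoc ℂ ℂ ℂ B C (B ⊗[ℂ] C)).trans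
      (Algebra.TensorProduct.congr (AlgEquiv.refl (A₁ := B))
        (Algebra.TensorProduct.assoc ℂ ℂ ℂ C B C).symm)).toAlgHom)

/-- `G : (B⊗(C⊗C))⊗(B⊗C) → B⊗(C⊗(C⊗C))`, `(b⊗(c₁⊗c₂))⊗(b'⊗c') ↦ bb'⊗(c₁⊗(c₂⊗c'))`. -/
noncomputable def Ghom : ((B ⊗[ℂ] (C ⊗[ℂ] C)) ⊗[ℂ] (B ⊗[ℂ] C)) →ₐ[ℂ]
    B ⊗[ℂ] (C ⊗[ℂ] (C ⊗[ℂ] C)) :=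
  (Algebra.TensorProduct.map (Algebra.TensorProduct.lmul' ℂ (S := B))
      (AlgHom.id ℂ (C ⊗[ℂ] (C ⊗[ℂ] C)))).comp
  ((Algebra.TensorProduct.assoc ℂ ℂ ℂ B (C ⊗[ℂ] C) (B ⊗[ℂ] C)).trans <|
   (Algebra.TensorProduct.congr (AlgEquiv.refl (A₁ := B)) <|
     ((Algebra.TensorProduct.assoc ℂ ℂ ℂ (C ⊗[ℂ] C) B C).symm.trans
       (Algebra.TensorProduct.congr (Algebra.TensorProduct.comm ℂ (C ⊗[ℂ] C) B)
         (AlgEquiv.refl (A₁ := C)))).trans <|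
     (Algebra.TensorProduct.assoc ℂ ℂ ℂ B (C ⊗[ℂ] C) C).trans
       (Algebra.TensorProduct.congr (AlgEquiv.refl (A₁ := B))
         (Algebra.TensorProduct.assoc ℂ ℂ ℂ C C C))).trans
   (Algebra.TensorProduct.assoc ℂ ℂ ℂ B B (C ⊗[ℂ] (C ⊗[ℂ] C))).symm).toAlgHom

variable (Γ : C →ₐ[ℂ] C ⊗[ℂ] C)

lemma L1 :
    ((Algebra.TensorProduct.congr (AlgEquiv.refl (A₁ := B))
        (Algebra.TensorProduct.assoc ℂ ℂ ℂ C C C)).toAlgHom).comp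
      ((Algebra.TensorProduct.map (AlgHom.id ℂ B)
          (Algebra.TensorProduct.map Γ (AlgHom.id ℂ C))).comp (Khom B C)) =
    (Ghom B C).comp
      (Algebra.TensorProduct.map
        (Algebra.TensorProduct.map (AlgHom.id ℂ B) Γ) (AlgHom.id ℂ (B ⊗[ℂ] C))) := by
  ext <;>
  simp [Khom, Ghom, flipCB, Algebra.TensorProduct.assoc_tmul,
    Algebra.TensorProduct.comm_tmul, Algebra.TensorProduct.lmul'_apply_tmul, Algebra.TensorProduct.assoc_symm_tmul, Algebra.TensorProduct.comm_symm_tmul, Algebra.TensorProduct.one_def]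

set_option maxHeartbeats 4000000 in
lemma L2 :
    (Ghom B C).comp
      (Algebra.TensorProduct.map (Khom B C) (AlgHom.id ℂ (B ⊗[ℂ] C))) =
    (sixFoldRHSAlg B C).comp (reassocSix' B C).toAlgHom := by
  ext <;>
  simp only [Khom, Ghom, sixFoldRHSAlg, WhomAlg, reassocSix', flipCB,
    AlgHom.coe_comp, Function.comp_apply, AlgEquiv.toAlgHom_eq_coe, AlgHom.coe_coe, AlgEquiv.coe_toAlgHom,
    AlgEquiv.trans_apply, Algebra.TensorProduct.congr_apply,
    Algebra.TensorProduct.map_tmul, AlgHom.id_apply, AlgEquiv.coe_refl, id_eq, AlgHom.coe_restrictScalars', Algebra.TensorProduct.includeLeft_apply, Algebra.TensorProduct.includeRight_apply,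
    Algebra.TensorProduct.one_def,
    Algebra.TensorProduct.assoc_tmul, Algebra.TensorProduct.assoc_symm_tmul,
    Algebra.TensorProduct.comm_tmul, Algebra.TensorProduct.comm_symm_tmul,
    Algebra.TensorProduct.lmul'_apply_tmul, mul_one, one_mul, map_one]

end Aux
/-- if `(id_B ⊗ Γ) ∘ Φ = (m ⊗ id_{C⊗C}) ∘ (id_B ⊗ F ⊗ id_C) ∘ (Φ ⊗ Φ) ∘ Δ`,
then `(id_B ⊗ Γ ⊗ id_C) ∘ (id_B ⊗ Γ) ∘ Φ = (m ⊗ id_{C⊗C⊗C}) ∘ W ∘ (m ⊗ id_{C⊗C⊗B⊗C}) ∘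
(id_B ⊗ F ⊗ id_{C⊗B⊗C}) ∘ (Φ ⊗ Φ ⊗ Φ) ∘ (Δ ⊗ id_A) ∘ Δ`. -/
theorem comul_right_coassoc_expansion
    (A B C : Type) [Ring A] [CommRing B] [Ring C]
    [Algebra ℂ A] [Algebra ℂ B] [Algebra ℂ C]
    (Δ : A →ₐ[ℂ] A ⊗[ℂ] A) (Φ : A →ₐ[ℂ] B ⊗[ℂ] C) (Γ : C →ₐ[ℂ] C ⊗[ℂ] C)
    (hΓ : (Algebra.TensorProduct.map (AlgHom.id ℂ B) Γ).comp Φ = comulRHS B C A Δ Φ) :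
    ((Algebra.TensorProduct.congr (AlgEquiv.refl (A₁ := B))
        (Algebra.TensorProduct.assoc ℂ ℂ ℂ C C C)).toAlgHom).comp
      ((Algebra.TensorProduct.map (AlgHom.id ℂ B)
          (Algebra.TensorProduct.map Γ (AlgHom.id ℂ C))).comp
        ((Algebra.TensorProduct.map (AlgHom.id ℂ B) Γ).comp Φ)) =
    (sixFoldRHSAlg B C).comp ((reassocSix' B C).toAlgHom.comp
      ((Algebra.TensorProduct.map (Algebra.TensorProduct.map Φ Φ) Φ).comp
        ((Algebra.TensorProduct.map Δ (AlgHom.id ℂ A)).comp Δ))) := by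
  have hK : comulRHS B C A Δ Φ = (Khom B C).comp ((Algebra.TensorProduct.map Φ Φ).comp Δ) := rfl
  -- Γ applied pointwise
  apply AlgHom.ext; intro a
  have h1 : (Algebra.TensorProduct.map (AlgHom.id ℂ B) Γ) (Φ a)
      = (Khom B C) ((Algebra.TensorProduct.map Φ Φ) (Δ a)) := by
    simpa [AlgHom.comp_apply, hK] using DFunLike.congr_fun hΓ a
  have h2 := DFunLike.congr_fun (L1 B C Γ) ((Algebra.TensorProduct.map Φ Φ) (Δ a))
  have h3hom :
      (Algebra.TensorProduct.map
          (Algebra.TensorProduct.map (AlgHom.id ℂ B) Γ) (AlgHom.id ℂ (B ⊗[ℂ] C))).comp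
        (Algebra.TensorProduct.map Φ Φ)
      = (Algebra.TensorProduct.map (Khom B C) (AlgHom.id ℂ (B ⊗[ℂ] C))).comp
          ((Algebra.TensorProduct.map (Algebra.TensorProduct.map Φ Φ) Φ).comp
            (Algebra.TensorProduct.map Δ (AlgHom.id ℂ A))) := by
    rw [← Algebra.TensorProduct.map_comp, ← Algebra.TensorProduct.map_comp,
      ← Algebra.TensorProduct.map_comp, hΓ, hK]
    congr 1
  have h3 := DFunLike.congr_fun h3hom (Δ a)
  have h4 := DFunLike.congr_fun (L2 B C)
    ((Algebra.TensorProduct.map (Algebra.TensorProduct.map Φ Φ) Φ)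
      ((Algebra.TensorProduct.map Δ (AlgHom.id ℂ A)) (Δ a)))
  simp only [AlgHom.comp_apply] at h2 h3 h4 ⊢
  rw [h1, h2, h3, h4]
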